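/- The q-tangent numbers T_{2n+1}(q) of the (1,0,1,0) family satisfy the recursion T_{2n+1}(q) + sum_{k=1}^{n} C(2n+1,2k)_q · (-1)^k · q^(k(k-1)/2) · (prod_{i=1}^{k-1}(1+q^i)^2) · (1+q^k) · T_{2n+1-2k}(q) = (-1)^n q^(n(n-1)/2) prod_{i=1}^{n} (1+q^i)^2. -/

import Mathlib

noncomputable section
open Finset PowerSeries

abbrev Fq : Type := RatFunc ℚ

/-- The variable `q` as element of the field of rational functions `ℚ(q)`. -/
def qv : Fq := RatFunc.X

/-- The q-integer `[m]_q = 1 + q + ... + q^(m-1)`. -/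
def qInt (x : Fq) (m : ℕ) : Fq := ∑ i ∈ Finset.range m, x ^ i

/-- The q-factorial `[m]_q! = [1]_q [2]_q ⋯ [m]_q`. -/
def qFact (x : Fq) (m : ℕ) : Fq := ∏ i ∈ Finset.range m, qInt x (i + 1)

/-- `sin_q(z) = ∑ (-1)^n q^(n^2) z^(2n+1)/[2n+1]_q!`. -/
def qsin (x : Fq) : PowerSeries Fq :=
  PowerSeries.mk fun m =>
    if m % 2 = 1 then (-1 : Fq) ^ (m / 2) * x ^ ((m / 2) ^ 2) / qFact x m else 0

/-- `cos_q(z) = ∑ (-1)^n q^(n^2) z^(2n)/[2n]_q!`. -/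
def qcos (x : Fq) : PowerSeries Fq :=
  PowerSeries.mk fun m =>
    if m % 2 = 0 then (-1 : Fq) ^ (m / 2) * x ^ ((m / 2) ^ 2) / qFact x m else 0

/-- The q-tangent `tan_q(z) = sin_q(z)/cos_q(z)` as a formal power series. -/
def qtan : PowerSeries Fq := qsin qv * (qcos qv)⁻¹

/-- The q-tangent numbers: `T_m(q) = [m]_q! · [z^m] tan_q(z)`. -/
def T (m : ℕ) : Fq := qFact qv m * PowerSeries.coeff m qtan

/-- The Gaussian binomial coefficient `C(m,k)_q` in `ℚ(q)`. -/
def qBin (m k : ℕ) : Fq := qFact qv m / (qFact qv k * qFact qv (m - k))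

lemma qv_ne_zero : qv ≠ 0 := RatFunc.X_ne_zero

lemma qInt_eq_map (m : ℕ) :
    qInt qv m = algebraMap (Polynomial ℚ) Fq (∑ i ∈ Finset.range m, Polynomial.X ^ i) := by
  rw [map_sum, qInt]
  exact Finset.sum_congr rfl fun i _ => by rw [map_pow, RatFunc.algebraMap_X]; rfl

lemma qInt_ne_zero {m : ℕ} (hm : 1 ≤ m) : qInt qv m ≠ 0 := by
  rw [qInt_eq_map]
  apply RatFunc.algebraMap_ne_zero
  intro h
  have := congrArg (Polynomial.eval 1) h
  simp [Polynomial.eval_finset_sum] at this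
  omega
  
lemma qFact_ne_zero (m : ℕ) : qFact qv m ≠ 0 := by
  rw [qFact]
  exact Finset.prod_ne_zero_iff.2 fun i _ => qInt_ne_zero (Nat.le_add_left 1 i)

lemma qFact_succ (m : ℕ) : qFact qv (m + 1) = qFact qv m * qInt qv (m + 1) :=
  Finset.prod_range_succ _ m

lemma qInt_add (a b : ℕ) : qInt qv (a + b) = qInt qv a + qv ^ a * qInt qv b := by
  rw [qInt, qInt, qInt, Finset.sum_range_add, Finset.mul_sum]
  congr 1
  exact Finset.sum_congr rfl fun i _ => (pow_add qv a i)

lemma qFact_zero : qFact qv 0 = 1 := Finset.prod_range_zero _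

lemma qBin_zero (m : ℕ) : qBin m 0 = 1 := by
  simp [qBin, qFact_zero, div_self (qFact_ne_zero m)]

lemma qBin_self (m : ℕ) : qBin m m = 1 := by
  simp [qBin, qFact_zero, div_self (qFact_ne_zero m)]

lemma qBin_pascal {m j : ℕ} (hj : j < m) :
    qBin (m + 1) (j + 1) = qBin m j + qv ^ (j + 1) * qBin m (j + 1) := by
  have h1 : m + 1 - (j + 1) = m - j := by omega
  have h2 : m - (j + 1) = m - j - 1 := by omega
  have h3 : qFact qv (m - j) = qFact qv (m - j - 1) * qInt qv (m - j) := by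
    have : m - j = (m - j - 1) + 1 := by omega
    rw [this, qFact_succ]; rw [← this]
  have h4 : qInt qv (m + 1) = qInt qv (j + 1) + qv ^ (j + 1) * qInt qv (m - j) := by
    have : m + 1 = (j + 1) + (m - j) := by omega
    rw [this, qInt_add]
  rw [qBin, qBin, qBin, h1, h2, qFact_succ m, qFact_succ j, h3, h4]
  have n1 := qFact_ne_zero m
  have n2 := qFact_ne_zero j
  have n3 := qFact_ne_zero (m - j)
  have n4 := qFact_ne_zero (m - j - 1)
  have n5 : qInt qv (j + 1) ≠ 0 := qInt_ne_zero (by omega)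
  have n6 : qInt qv (m - j) ≠ 0 := qInt_ne_zero (by omega)
  field_simp

lemma tri_succ (k : ℕ) : (k + 1) * (k + 1 - 1) / 2 = k * (k - 1) / 2 + k := by
  rw [← Finset.sum_range_id, ← Finset.sum_range_id, Finset.sum_range_succ]

/-- The q-binomial theorem. -/
lemma qbt (m : ℕ) (t : Fq) :
    ∑ j ∈ Finset.range (m + 1), qBin m j * qv ^ (j * (j - 1) / 2) * t ^ j
      = ∏ i ∈ Finset.range m, (1 + qv ^ i * t) := by
  induction m generalizing t with
  | zero => simp [qBin_zero]
  | succ m ih =>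
    have key : ∏ i ∈ Finset.range (m + 1), (1 + qv ^ i * t)
        = (1 + t) * ∏ i ∈ Finset.range m, (1 + qv ^ i * (qv * t)) := by
      rw [Finset.prod_range_succ' (fun i => 1 + qv ^ i * t)]
      rw [mul_comm]
      congr 1
      · rw [pow_zero, one_mul]
      · exact Finset.prod_congr rfl fun i _ => by rw [pow_succ]; ring
    rw [key, ← ih (qv * t), add_mul, one_mul, Finset.mul_sum]
    have expand : ∀ j : ℕ, qBin m j * qv ^ (j * (j - 1) / 2) * (qv * t) ^ j
        = qBin m j * qv ^ (j * (j - 1) / 2) * qv ^ j * t ^ j := fun j => by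
      rw [mul_pow]; ring
    have texpand : ∀ j : ℕ, t * (qBin m j * qv ^ (j * (j - 1) / 2) * (qv * t) ^ j)
        = qBin m j * qv ^ (j * (j - 1) / 2) * qv ^ j * t ^ (j + 1) := fun j => by
      rw [mul_pow]; ring
    rw [Finset.sum_congr rfl fun j _ => expand j, Finset.sum_congr rfl fun j _ => texpand j]
    rw [Finset.sum_range_succ' (fun j => qBin (m+1) j * qv ^ (j * (j - 1) / 2) * t ^ j) (m+1)]
    rw [Finset.sum_range_succ' (fun j => qBin m j * qv ^ (j * (j-1)/2) * qv ^ j * t ^ j) m]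
    rw [Finset.sum_range_succ (fun j => qBin m j * qv ^ (j * (j-1)/2) * qv ^ j * t ^ (j+1)) m]
    rw [Finset.sum_range_succ
      (fun k => qBin (m+1) (k+1) * qv ^ ((k+1) * (k+1-1) / 2) * t ^ (k+1)) m]
    have main : ∀ k, k < m → qBin (m+1) (k+1) * qv ^ ((k+1)*(k+1-1)/2) * t^(k+1)
        = qBin m (k+1) * qv ^ ((k+1)*(k+1-1)/2) * qv^(k+1) * t^(k+1)
          + qBin m k * qv ^ (k*(k-1)/2) * qv^k * t^(k+1) := by
      intro k hk
      rw [qBin_pascal hk, tri_succ k, pow_add, pow_add]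
      ring
    rw [Finset.sum_congr rfl (fun k hk => main k (Finset.mem_range.1 hk)),
      Finset.sum_add_distrib]
    rw [qBin_self (m+1), qBin_self m, qBin_zero, qBin_zero, tri_succ m, pow_add]
    ring

lemma qBin_symm {m j : ℕ} (h : j ≤ m) : qBin m j = qBin m (m - j) := by
  rw [qBin, qBin]
  have hh : m - (m - j) = j := by omega
  rw [hh, mul_comm]

-- nat helpers
lemma sum_split (s : ℕ) (f : ℕ → Fq) :
    ∑ i ∈ Finset.range (2 * s + 1), f i
      = (∑ k ∈ Finset.range (s + 1), f (2 * k)) + ∑ k ∈ Finset.range s, f (2 * k + 1) := by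
  induction s with
  | zero => simp
  | succ s ih =>
    have h : 2 * (s + 1) + 1 = (2 * s + 1) + 1 + 1 := by ring
    rw [h, Finset.sum_range_succ, Finset.sum_range_succ, ih,
      Finset.sum_range_succ (fun k => f (2 * k)) (s + 1),
      Finset.sum_range_succ (fun k => f (2 * k + 1)) s]
    have e1 : 2 * s + 1 + 1 = 2 * (s + 1) := by ring
    have e2 : 2 * s + 1 = 2 * s + 1 := rfl
    rw [e1]
    ring

lemma sum_split' (s : ℕ) (f : ℕ → Fq) :
    ∑ i ∈ Finset.range (2 * s + 2), f i
      = (∑ k ∈ Finset.range (s + 1), f (2 * k)) + ∑ k ∈ Finset.range (s + 1), f (2 * k + 1) := by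
  have h : 2 * s + 2 = (2 * s + 1) + 1 := by ring
  rw [h, Finset.sum_range_succ, sum_split s f,
    Finset.sum_range_succ (fun k => f (2 * k + 1)) s]
  ring

lemma half_cert {a b : ℕ} (h : a = b * 2) : a / 2 = b := by omega

lemma triEven (k : ℕ) : 2 * k * (2 * k - 1) / 2 = k * k + k * (k - 1) := by
  cases k with
  | zero => rfl
  | succ m =>
    apply half_cert
    have h1 : 2 * (m + 1) - 1 = 2 * m + 1 := by omega
    have h2 : m + 1 - 1 = m := by omega
    rw [h1, h2]; ring

lemma triOdd (k : ℕ) : (2 * k + 1) * (2 * k + 1 - 1) / 2 = k * k + k * k + k := by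
  apply half_cert
  have h1 : 2 * k + 1 - 1 = 2 * k := by omega
  rw [h1]; ring

lemma qpow_eq {a1 b1 a2 b2 : ℕ} (h : a1 + b2 = a2 + b1) :
    qv ^ a1 * (qv ^ b1)⁻¹ = qv ^ a2 * (qv ^ b2)⁻¹ := by
  have hb1 : (qv : Fq) ^ b1 ≠ 0 := pow_ne_zero _ qv_ne_zero
  have hb2 : (qv : Fq) ^ b2 ≠ 0 := pow_ne_zero _ qv_ne_zero
  field_simp
  rw [← pow_add, ← pow_add, h]
  ring


lemma prod_inv_pow (n : ℕ) (g : ℕ → ℕ) :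
    ∏ i ∈ Finset.range n, ((qv : Fq) ^ g i)⁻¹ = ((qv : Fq) ^ (∑ i ∈ Finset.range n, g i))⁻¹ := by
  rw [← Finset.prod_pow_eq_pow_sum, Finset.prod_inv_distrib]

lemma sum_range_add_one (n : ℕ) : ∑ i ∈ Finset.range n, (i + 1) = n * (n + 1) / 2 := by
  have h : ∑ i ∈ Finset.range n, (i + 1) = ∑ i ∈ Finset.range (n + 1), i := by
    rw [Finset.sum_range_succ' (fun i => i) n]
    simp
  rw [h, Finset.sum_range_id]
  congr 1
  cases n with
  | zero => rfl
  | succ m => simp [Nat.add_sub_cancel]; ring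

lemma prod_Icc_sq (n : ℕ) :
    ∏ i ∈ Finset.Icc 1 n, (1 + (qv:Fq) ^ i) ^ 2 = ∏ i ∈ Finset.range n, (1 + qv ^ (i+1)) ^ 2 := by
  have h : Finset.Icc 1 n = Finset.Ico 1 (n + 1) := rfl
  rw [h, Finset.prod_Ico_eq_prod_range]
  simp [add_comm]

lemma sq_split (n : ℕ) : (∑ i ∈ Finset.range n, i) + ∑ i ∈ Finset.range n, (i+1) = n*n := by
  induction n with
  | zero => simp
  | succ m ih =>
    rw [Finset.sum_range_succ, Finset.sum_range_succ]
    have c : (m+1)*(m+1) = m*m + 2*m + 1 := by ring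
    omega

/-- Key identity B. -/
lemma identB (n : ℕ) :
    ∑ k ∈ Finset.range (n+1), qBin (2*n+1) (2*k) * qv ^ ((n-k)*(n-k) + k*(k-1))
      = qv ^ (n*(n-1)/2) * ∏ i ∈ Finset.Icc 1 n, (1 + qv^i)^2 := by
  set u : Fq := ((qv : Fq) ^ n)⁻¹ with hu
  set f : ℕ → Fq := fun j => qBin (2*n+1) j * qv ^ (j*(j-1)/2) * u ^ j with hf
  have total : ∑ j ∈ Finset.range (2*n+1+1), f j = ∏ i ∈ Finset.range (2*n+1), (1 + qv^i * u) :=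
    qbt (2*n+1) u
  have split : ∑ j ∈ Finset.range (2*n+2), f j
      = (∑ k ∈ Finset.range (n+1), f (2*k)) + ∑ k ∈ Finset.range (n+1), f (2*k+1) := sum_split' n f
  have reflectTerm : ∀ k, k ≤ n → f (2*k+1) = f (2*(n-k)) := by
    intro k hk
    have hsymm : qBin (2*n+1) (2*k+1) = qBin (2*n+1) (2*(n-k)) := by
      have h1 : 2*n+1 - (2*k+1) = 2*(n-k) := by omega
      rw [qBin_symm (show 2*k+1 ≤ 2*n+1 by omega), h1]
    simp only [hf]
    rw [hsymm, mul_assoc, mul_assoc]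
    congr 1
    have hud : ∀ j : ℕ, u ^ j = ((qv:Fq) ^ (n * j))⁻¹ := by
      intro j; rw [hu, inv_pow, ← pow_mul]
    rw [hud, hud, triOdd k]
    have h2 : 2*(n-k) * (2*(n-k) - 1) / 2 = (n-k)*(n-k) + (n-k)*((n-k)-1) := triEven (n-k)
    have h3 : 2*(n-k)*(2*(n-k)-1)/2 = 2*(n-k)*(2*(n-k)-1)/2 := rfl
    rw [h2]
    exact qpow_eq (by
      obtain ⟨d, rfl⟩ : ∃ d, n = k + d := ⟨n - k, by omega⟩
      simp only [Nat.add_sub_cancel_left]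
      cases d with
      | zero => simp; ring
      | succ e =>
        simp only [Nat.add_sub_cancel]
        ring)
  have reflect : ∑ k ∈ Finset.range (n+1), f (2*k+1) = ∑ k ∈ Finset.range (n+1), f (2*k) := by
    rw [Finset.sum_congr rfl (fun k hk => reflectTerm k (by
      have := Finset.mem_range.1 hk; omega))]
    have := Finset.sum_range_reflect (fun k => f (2*k)) (n+1)
    simp only [Nat.add_sub_cancel] at this
    exact this
  have prodEval : ∏ i ∈ Finset.range (2*n+1), (1 + qv^i * u)
      = 2 * ((qv:Fq) ^ (n*(n+1)/2))⁻¹ * ∏ i ∈ Finset.Icc 1 n, (1 + qv^i)^2 := by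
    have hsplit : (2*n+1) = n + (n+1) := by ring
    rw [hsplit, Finset.prod_range_add]
    have second : ∏ i ∈ Finset.range (n+1), (1 + qv^(n+i) * u)
        = 2 * ∏ i ∈ Finset.range n, (1 + qv ^ (i+1)) := by
      rw [Finset.prod_range_succ' (fun i => 1 + qv^(n+i) * u) n]
      have g0 : 1 + qv^(n+0) * u = 2 := by
        rw [hu, add_zero, mul_inv_cancel₀ (pow_ne_zero _ qv_ne_zero)]; norm_num
      rw [g0, mul_comm]
      congr 1
      refine Finset.prod_congr rfl fun i _ => ?_
      congr 1
      rw [hu]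
      have := qpow_eq (a1 := n+(i+1)) (b1 := n) (a2 := i+1) (b2 := 0) (by omega)
      simpa using this
    have first : ∏ i ∈ Finset.range n, (1 + qv^i * u)
        = ∏ j ∈ Finset.range n, (((qv:Fq) ^ (j+1))⁻¹ * (1 + qv ^ (j+1))) := by
      rw [← Finset.prod_range_reflect (fun i => 1 + qv^i * u) n]
      refine Finset.prod_congr rfl fun j hj => ?_
      have hj' := Finset.mem_range.1 hj
      have step1 : qv^(n-1-j) * u = ((qv:Fq) ^ (j+1))⁻¹ := by
        rw [hu]
        have := qpow_eq (a1 := n-1-j) (b1 := n) (a2 := 0) (b2 := j+1) (by omega)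
        simpa using this
      rw [step1]
      have hne : ((qv:Fq) ^ (j+1)) ≠ 0 := pow_ne_zero _ qv_ne_zero
      field_simp
      ring
    rw [first, second, Finset.prod_mul_distrib, prod_inv_pow n (fun j => j + 1),
      sum_range_add_one, prod_Icc_sq]
    rw [Finset.prod_pow]
    ring
  have two_ne : (2:Fq) ≠ 0 := by
    have h : algebraMap (Polynomial ℚ) Fq 2 ≠ 0 := RatFunc.algebraMap_ne_zero (by norm_num)
    rw [map_ofNat] at h
    exact h
  have sum_even : ∑ k ∈ Finset.range (n+1), f (2*k)
      = ((qv:Fq) ^ (n*(n+1)/2))⁻¹ * ∏ i ∈ Finset.Icc 1 n, (1 + qv^i)^2 := by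
    apply mul_left_cancel₀ two_ne
    calc (2:Fq) * ∑ k ∈ Finset.range (n+1), f (2*k)
        = (∑ k ∈ Finset.range (n+1), f (2*k)) + ∑ k ∈ Finset.range (n+1), f (2*k+1) := by
          rw [reflect]; ring
      _ = ∑ j ∈ Finset.range (2*n+2), f j := split.symm
      _ = ∏ i ∈ Finset.range (2*n+1), (1 + qv^i * u) := total
      _ = 2 * (((qv:Fq) ^ (n*(n+1)/2))⁻¹ * ∏ i ∈ Finset.Icc 1 n, (1 + qv^i)^2) := by
          rw [prodEval]; ring
  have termMatch : ∀ k ∈ Finset.range (n+1),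
      qBin (2*n+1) (2*k) * qv ^ ((n-k)*(n-k) + k*(k-1)) = qv^(n*n) * f (2*k) := by
    intro k hk
    have hk' : k ≤ n := by have := Finset.mem_range.1 hk; omega
    simp only [hf]
    rw [triEven k, hu, inv_pow, ← pow_mul]
    have key : (qv:Fq) ^ ((n-k)*(n-k) + k*(k-1))
        = qv^(n*n + (k*k + k*(k-1))) * ((qv:Fq) ^ (n*(2*k)))⁻¹ := by
      have := qpow_eq (a1 := (n-k)*(n-k) + k*(k-1)) (b1 := 0)
        (a2 := n*n + (k*k + k*(k-1))) (b2 := n*(2*k)) (by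
          obtain ⟨d, rfl⟩ : ∃ d, n = k + d := ⟨n - k, by omega⟩
          simp only [Nat.add_sub_cancel_left]
          ring)
      simpa using this
    rw [key, pow_add]
    ring
  rw [Finset.sum_congr rfl termMatch, ← Finset.mul_sum, sum_even]
  rw [← mul_assoc]
  congr 1
  have h1 : ∑ i ∈ Finset.range n, i = n*(n-1)/2 := Finset.sum_range_id n
  have h2 : (∑ i ∈ Finset.range n, i) * 2 = n * (n-1) := Finset.sum_range_id_mul_two n
  have h3 : ∑ i ∈ Finset.range n, (i+1) = n*(n+1)/2 := sum_range_add_one n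
  have hsq : (∑ i ∈ Finset.range n, i) + ∑ i ∈ Finset.range n, (i+1) = n*n := sq_split n
  have := qpow_eq (a1 := n*n) (b1 := n*(n+1)/2) (a2 := n*(n-1)/2) (b2 := 0) (by omega)
  simpa using this


/-- Key identity A. -/
lemma identA (n : ℕ) (hn : 1 ≤ n) :
    ∑ k ∈ Finset.range (n+1), qBin (2*n) (2*k) * qv ^ (k*k + (n-k)*(n-k-1))
      = qv ^ (n*(n-1)/2) * ((1 + qv^n) * ∏ i ∈ Finset.Icc 1 (n-1), (1 + qv^i)^2) := by
  set u : Fq := ((qv : Fq) ^ n)⁻¹ with hu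
  set t : Fq := qv * u with ht
  set f : ℕ → Fq := fun j => qBin (2*n) j * qv ^ (j*(j-1)/2) * t ^ j with hf
  set g : ℕ → Fq := fun j => qBin (2*n) j * qv ^ (j*(j-1)/2) * (-t) ^ j with hg
  have total1 : ∑ j ∈ Finset.range (2*n+1), f j = ∏ i ∈ Finset.range (2*n), (1 + qv^i * t) :=
    qbt (2*n) t
  have total2 : ∑ j ∈ Finset.range (2*n+1), g j = ∏ i ∈ Finset.range (2*n), (1 + qv^i * (-t)) :=
    qbt (2*n) (-t)
  have zero2 : ∏ i ∈ Finset.range (2*n), (1 + qv^i * (-t)) = 0 := by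
    apply Finset.prod_eq_zero (Finset.mem_range.2 (show n-1 < 2*n by omega))
    have hpow : (qv:Fq) ^ (n-1) * t = 1 := by
      rw [ht, hu, ← mul_assoc, ← pow_succ]
      have h1 : n - 1 + 1 = n := by omega
      rw [h1, mul_inv_cancel₀ (pow_ne_zero _ qv_ne_zero)]
    rw [mul_neg, hpow]
    ring
  have split1 := sum_split n f
  have split2 := sum_split n g
  have oddCancel : ∀ k : ℕ, g (2*k+1) = - f (2*k+1) := by
    intro k
    simp only [hf, hg]
    rw [Odd.neg_pow ⟨k, by ring⟩]
    ring
  have evenSame : ∀ k : ℕ, g (2*k) = f (2*k) := by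
    intro k
    simp only [hf, hg]
    rw [Even.neg_pow ⟨k, by ring⟩]
  have sum2f : (2:Fq) * ∑ k ∈ Finset.range (n+1), f (2*k)
      = ∏ i ∈ Finset.range (2*n), (1 + qv^i * t) := by
    have e1 : ∑ k ∈ Finset.range n, g (2*k+1) = - ∑ k ∈ Finset.range n, f (2*k+1) := by
      rw [← Finset.sum_neg_distrib]
      exact Finset.sum_congr rfl fun k _ => oddCancel k
    have e2 : ∑ k ∈ Finset.range (n+1), g (2*k) = ∑ k ∈ Finset.range (n+1), f (2*k) := by
      exact Finset.sum_congr rfl fun k _ => evenSame k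
    have := total1
    rw [split1] at this
    have h2 := total2
    rw [split2, e1, e2, zero2] at h2
    rw [two_mul]
    linear_combination this + h2
  have prodEval : ∏ i ∈ Finset.range (2*n), (1 + qv^i * t)
      = 2 * ((qv:Fq) ^ (n*(n-1)/2))⁻¹ * ((1 + qv^n) * ∏ i ∈ Finset.Icc 1 (n-1), (1 + qv^i)^2) := by
    have hsplit : (2*n) = n + n := by ring
    rw [hsplit, Finset.prod_range_add]
    have second : ∏ i ∈ Finset.range n, (1 + qv^(n+i) * t)
        = (∏ i ∈ Finset.range (n-1), (1 + qv ^ (i+1))) * (1 + qv^n) := by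
      have e : ∀ i : ℕ, 1 + qv^(n+i) * t = 1 + qv ^ (i+1) := by
        intro i
        congr 1
        rw [ht, hu, ← mul_assoc, ← pow_succ]
        have := qpow_eq (a1 := n+i+1) (b1 := n) (a2 := i+1) (b2 := 0) (by omega)
        simpa using this
      rw [Finset.prod_congr rfl fun i _ => e i]
      have hn' : n = (n-1) + 1 := by omega
      rw [hn', Finset.prod_range_succ]
      rw [← hn']
    have first : ∏ i ∈ Finset.range n, (1 + qv^i * t)
        = 2 * ∏ j ∈ Finset.range (n-1), (((qv:Fq) ^ (j+1))⁻¹ * (1 + qv ^ (j+1))) := by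
      rw [← Finset.prod_range_reflect (fun i => 1 + qv^i * t) n]
      have e : ∀ j, j < n → 1 + qv^(n-1-j) * t = 1 + ((qv:Fq) ^ j)⁻¹ := by
        intro j hj
        congr 1
        rw [ht, hu, ← mul_assoc, ← pow_succ]
        have := qpow_eq (a1 := (n-1-j)+1) (b1 := n) (a2 := 0) (b2 := j) (by omega)
        simpa using this
      rw [Finset.prod_congr rfl fun j hj => e j (Finset.mem_range.1 hj)]
      have hn' : n = (n-1) + 1 := by omega
      rw [hn', Finset.prod_range_succ' (fun j => 1 + ((qv:Fq) ^ j)⁻¹) (n-1), ← hn']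
      have last : 1 + ((qv:Fq) ^ 0)⁻¹ = 2 := by norm_num
      rw [last, mul_comm]
      congr 1
      refine Finset.prod_congr rfl fun j _ => ?_
      have hne : ((qv:Fq) ^ (j+1)) ≠ 0 := pow_ne_zero _ qv_ne_zero
      field_simp
      ring
    rw [first, second, Finset.prod_mul_distrib, prod_inv_pow (n-1) (fun j => j + 1),
      sum_range_add_one, prod_Icc_sq, Finset.prod_pow]
    have he : (n-1) * ((n-1) + 1) / 2 = n * (n-1) / 2 := by
      have h1 : (n-1) + 1 = n := by omega
      rw [h1, Nat.mul_comm]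
    rw [he]
    ring
  have two_ne : (2:Fq) ≠ 0 := by
    have h : algebraMap (Polynomial ℚ) Fq 2 ≠ 0 := RatFunc.algebraMap_ne_zero (by norm_num)
    rw [map_ofNat] at h
    exact h
  have sum_even : ∑ k ∈ Finset.range (n+1), f (2*k)
      = ((qv:Fq) ^ (n*(n-1)/2))⁻¹ * ((1 + qv^n) * ∏ i ∈ Finset.Icc 1 (n-1), (1 + qv^i)^2) := by
    apply mul_left_cancel₀ two_ne
    rw [sum2f, prodEval]
    ring
  have termMatch : ∀ k ∈ Finset.range (n+1),
      qBin (2*n) (2*k) * qv ^ (k*k + (n-k)*(n-k-1)) = qv^(n*(n-1)) * f (2*k) := by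
    intro k hk
    have hk' : k ≤ n := by have := Finset.mem_range.1 hk; omega
    simp only [hf]
    rw [triEven k, ht, mul_pow, hu, inv_pow, ← pow_mul]
    have key : (qv:Fq) ^ (k*k + (n-k)*(n-k-1))
        = qv^(n*(n-1) + (k*k + k*(k-1)) + 2*k) * ((qv:Fq) ^ (n*(2*k)))⁻¹ := by
      have cond : (k*k + (n-k)*(n-k-1)) + n*(2*k) = (n*(n-1) + (k*k + k*(k-1)) + 2*k) + 0 := by
        cases k with
        | zero => simp
        | succ a =>
          obtain ⟨d, rfl⟩ : ∃ d, n = (a+1) + d := ⟨n - (a+1), by omega⟩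
          have h1 : (a+1) + d - (a+1) = d := by omega
          have h2 : (a+1) - 1 = a := by omega
          have h3 : (a+1) + d - 1 = a + d := by omega
          rw [h1, h2, h3]
          cases d with
          | zero => simp; ring
          | succ e =>
            have h4 : e + 1 - 1 = e := by omega
            rw [h4]
            ring
      have := qpow_eq (a1 := k*k + (n-k)*(n-k-1)) (b1 := 0)
        (a2 := n*(n-1) + (k*k + k*(k-1)) + 2*k) (b2 := n*(2*k)) cond
      simpa using this
    rw [key, pow_add, pow_add]
    ring
  rw [Finset.sum_congr rfl termMatch, ← Finset.mul_sum, sum_even, ← mul_assoc]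
  congr 1
  have cert : n*(n-1) = n*(n-1)/2 + n*(n-1)/2 := by
    have h2 : (∑ i ∈ Finset.range n, i) * 2 = n * (n-1) := Finset.sum_range_id_mul_two n
    have h1 : ∑ i ∈ Finset.range n, i = n*(n-1)/2 := Finset.sum_range_id n
    omega
  have := qpow_eq (a1 := n*(n-1)) (b1 := n*(n-1)/2) (a2 := n*(n-1)/2) (b2 := 0) (by omega)
  simpa using this

/-- The companion series `Φ(z) = ∑ (-1)^k q^(k(k-1)) z^(2k)/[2k]_q!`. -/
def Phi : PowerSeries Fq :=
  PowerSeries.mk fun m =>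
    if m % 2 = 0 then (-1 : Fq) ^ (m / 2) * qv ^ ((m / 2) * (m / 2 - 1)) / qFact qv m else 0

lemma qcos_coeff_odd (m : ℕ) (h : m % 2 = 1) : PowerSeries.coeff m (qcos qv) = 0 := by
  rw [qcos, PowerSeries.coeff_mk]
  simp [h]

lemma Phi_coeff_odd (m : ℕ) (h : m % 2 = 1) : PowerSeries.coeff m Phi = 0 := by
  rw [Phi, PowerSeries.coeff_mk]
  simp [h]

lemma qsin_coeff (k : ℕ) :
    PowerSeries.coeff (2 * k + 1) (qsin qv) = (-1:Fq) ^ k * qv ^ (k * k) / qFact qv (2 * k + 1) := by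
  rw [qsin, PowerSeries.coeff_mk]
  have h1 : (2 * k + 1) % 2 = 1 := by omega
  have h2 : (2 * k + 1) / 2 = k := by omega
  rw [if_pos h1, h2, sq]

lemma qcos_coeff (k : ℕ) :
    PowerSeries.coeff (2 * k) (qcos qv) = (-1:Fq) ^ k * qv ^ (k * k) / qFact qv (2 * k) := by
  rw [qcos, PowerSeries.coeff_mk]
  have h1 : (2 * k) % 2 = 0 := by omega
  have h2 : (2 * k) / 2 = k := by omega
  rw [if_pos h1, h2, sq]

lemma Phi_coeff (k : ℕ) :
    PowerSeries.coeff (2 * k) Phi = (-1:Fq) ^ k * qv ^ (k * (k - 1)) / qFact qv (2 * k) := by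
  rw [Phi, PowerSeries.coeff_mk]
  have h1 : (2 * k) % 2 = 0 := by omega
  have h2 : (2 * k) / 2 = k := by omega
  rw [if_pos h1, h2]

lemma qtan_mul_qcos : qtan * qcos qv = qsin qv := by
  have hc : PowerSeries.constantCoeff (qcos qv) ≠ 0 := by
    rw [← PowerSeries.coeff_zero_eq_constantCoeff_apply, qcos, PowerSeries.coeff_mk]
    norm_num [qFact_zero]
  rw [qtan, mul_assoc, PowerSeries.inv_mul_cancel _ hc, mul_one]

lemma coeff_mul_odd (A B : PowerSeries Fq) (hB : ∀ m, m % 2 = 1 → PowerSeries.coeff m B = 0)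
    (n : ℕ) :
    PowerSeries.coeff (2 * n + 1) (A * B)
      = ∑ k ∈ Finset.range (n + 1),
          PowerSeries.coeff (2 * (n - k) + 1) A * PowerSeries.coeff (2 * k) B := by
  rw [PowerSeries.coeff_mul, Finset.Nat.sum_antidiagonal_eq_sum_range_succ_mk]
  simp only [Nat.succ_eq_add_one]
  rw [show 2 * n + 1 + 1 = 2 * n + 2 from rfl, sum_split' n (fun i => PowerSeries.coeff i A * PowerSeries.coeff (2 * n + 1 - i) B)]
  have hz : ∑ k ∈ Finset.range (n + 1),
      PowerSeries.coeff (2 * k) A * PowerSeries.coeff (2 * n + 1 - 2 * k) B = 0 := by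
    apply Finset.sum_eq_zero
    intro k hk
    have hk' := Finset.mem_range.1 hk
    rw [hB (2 * n + 1 - 2 * k) (by omega), mul_zero]
  rw [hz, zero_add]
  have e : ∀ k ∈ Finset.range (n + 1),
      PowerSeries.coeff (2 * k + 1) A * PowerSeries.coeff (2 * n + 1 - (2 * k + 1)) B
        = PowerSeries.coeff (2 * k + 1) A * PowerSeries.coeff (2 * (n - k)) B := by
    intro k hk
    have hk' := Finset.mem_range.1 hk
    have h12 : 2 * n + 1 - (2 * k + 1) = 2 * (n - k) := by omega
    rw [h12]
  rw [Finset.sum_congr rfl e]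
  rw [← Finset.sum_range_reflect
    (fun k => PowerSeries.coeff (2 * (n - k) + 1) A * PowerSeries.coeff (2 * k) B) (n + 1)]
  refine Finset.sum_congr rfl fun k hk => ?_
  have hk' := Finset.mem_range.1 hk
  have h1 : n + 1 - 1 - k = n - k := by omega
  have h2 : n - (n - k) = k := by omega
  rw [h1, h2]

lemma coeff_mul_even (A B : PowerSeries Fq)
    (hA : ∀ m, m % 2 = 1 → PowerSeries.coeff m A = 0) (n : ℕ) :
    PowerSeries.coeff (2 * n) (A * B)
      = ∑ k ∈ Finset.range (n + 1),
          PowerSeries.coeff (2 * k) A * PowerSeries.coeff (2 * (n - k)) B := by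
  rw [PowerSeries.coeff_mul, Finset.Nat.sum_antidiagonal_eq_sum_range_succ_mk]
  rw [sum_split n (fun i => PowerSeries.coeff i A * PowerSeries.coeff (2 * n - i) B)]
  have hz : ∑ k ∈ Finset.range n,
      PowerSeries.coeff (2 * k + 1) A * PowerSeries.coeff (2 * n - (2 * k + 1)) B = 0 := by
    apply Finset.sum_eq_zero
    intro k hk
    rw [hA (2 * k + 1) (by omega), zero_mul]
  rw [hz, add_zero]
  refine Finset.sum_congr rfl fun k hk => ?_
  have hk' := Finset.mem_range.1 hk
  have h : 2 * n - 2 * k = 2 * (n - k) := by omega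
  rw [h]

lemma evenprod_coeff_odd (m : ℕ) (h : m % 2 = 1) :
    PowerSeries.coeff m (qcos qv * Phi) = 0 := by
  rw [PowerSeries.coeff_mul]
  apply Finset.sum_eq_zero
  intro p hp
  have hm := Finset.HasAntidiagonal.mem_antidiagonal.1 hp
  rcases Nat.mod_two_eq_zero_or_one p.1 with he | ho
  · have : p.2 % 2 = 1 := by omega
    rw [Phi_coeff_odd p.2 this, mul_zero]
  · have : p.1 % 2 = 1 := by omega
    rw [qcos_coeff_odd p.1 this, zero_mul]

lemma Acoef_zero : qFact qv 0 * PowerSeries.coeff 0 (qcos qv * Phi) = 1 := by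
  have h : PowerSeries.coeff 0 (qcos qv * Phi)
      = PowerSeries.coeff 0 (qcos qv) * PowerSeries.coeff 0 Phi := by
    have := coeff_mul_even (qcos qv) Phi qcos_coeff_odd 0
    simpa using this
  have h1 := qcos_coeff 0
  have h2 := Phi_coeff 0
  simp only [Nat.mul_zero] at h1 h2
  rw [qFact_zero, h, h1, h2, qFact_zero]
  norm_num

lemma Acoef_eq (k : ℕ) (hk : 1 ≤ k) :
    qFact qv (2*k) * PowerSeries.coeff (2*k) (qcos qv * Phi)
      = (-1:Fq)^k * qv^(k*(k-1)/2) * (∏ i ∈ Finset.Icc 1 (k-1), (1+qv^i)^2) * (1+qv^k) := by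
  rw [coeff_mul_even (qcos qv) Phi qcos_coeff_odd k, Finset.mul_sum]
  have term : ∀ j ∈ Finset.range (k+1),
      qFact qv (2*k) * (PowerSeries.coeff (2*j) (qcos qv) * PowerSeries.coeff (2*(k-j)) Phi)
        = (-1:Fq)^k * (qBin (2*k) (2*j) * qv ^ (j*j + (k-j)*((k-j)-1))) := by
    intro j hj
    have hj' : j ≤ k := by have := Finset.mem_range.1 hj; omega
    rw [qcos_coeff j, Phi_coeff (k-j), qBin]
    have hsub : 2*k - 2*j = 2*(k-j) := by omega
    rw [hsub]
    have hsign : (-1:Fq)^j * (-1:Fq)^(k-j) = (-1:Fq)^k := by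
      rw [← pow_add]
      congr 1
      omega
    have hpow : (qv:Fq)^(j*j) * qv^((k-j)*((k-j)-1)) = qv^(j*j + (k-j)*((k-j)-1)) := by
      rw [← pow_add]
    have n1 := qFact_ne_zero (2*j)
    have n2 := qFact_ne_zero (2*(k-j))
    field_simp
    rw [← hsign, ← hpow]
    ring
  rw [Finset.sum_congr rfl term, ← Finset.mul_sum, identA k hk]
  ring

lemma Bco (n : ℕ) :
    qFact qv (2*n+1) * PowerSeries.coeff (2*n+1) (qsin qv * Phi)
      = (-1:Fq)^n * qv^(n*(n-1)/2) * ∏ i ∈ Finset.Icc 1 n, (1+qv^i)^2 := by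
  rw [coeff_mul_odd (qsin qv) Phi Phi_coeff_odd n, Finset.mul_sum]
  have term : ∀ k ∈ Finset.range (n+1),
      qFact qv (2*n+1) * (PowerSeries.coeff (2*(n-k)+1) (qsin qv) * PowerSeries.coeff (2*k) Phi)
        = (-1:Fq)^n * (qBin (2*n+1) (2*k) * qv ^ ((n-k)*(n-k) + k*(k-1))) := by
    intro k hk
    have hk' : k ≤ n := by have := Finset.mem_range.1 hk; omega
    rw [qsin_coeff (n-k), Phi_coeff k, qBin]
    have hsub : 2*n+1 - 2*k = 2*(n-k)+1 := by omega
    rw [hsub]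
    have hsign : (-1:Fq)^(n-k) * (-1:Fq)^k = (-1:Fq)^n := by
      rw [← pow_add]
      congr 1
      omega
    have hpow : (qv:Fq)^((n-k)*(n-k)) * qv^(k*(k-1)) = qv^((n-k)*(n-k) + k*(k-1)) := by
      rw [← pow_add]
    have n1 := qFact_ne_zero (2*(n-k)+1)
    have n2 := qFact_ne_zero (2*k)
    field_simp
    rw [← hsign, ← hpow]
    ring
  rw [Finset.sum_congr rfl term, ← Finset.mul_sum, identB n]
  ring

theorem q_tangent_recursion (n : ℕ) :
    T (2 * n + 1) +
      ∑ k ∈ Finset.Icc 1 n,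
        qBin (2 * n + 1) (2 * k) * (-1 : Fq) ^ k * qv ^ (k * (k - 1) / 2) *
          (∏ i ∈ Finset.Icc 1 (k - 1), (1 + qv ^ i) ^ 2) * (1 + qv ^ k) *
          T (2 * n + 1 - 2 * k) =
    (-1 : Fq) ^ n * qv ^ (n * (n - 1) / 2) * ∏ i ∈ Finset.Icc 1 n, (1 + qv ^ i) ^ 2 := by
  have main : ∑ k ∈ Finset.range (n+1),
      qBin (2*n+1) (2*k) * (qFact qv (2*k) * PowerSeries.coeff (2*k) (qcos qv * Phi))
        * T (2*(n-k)+1)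
      = (-1:Fq)^n * qv^(n*(n-1)/2) * ∏ i ∈ Finset.Icc 1 n, (1+qv^i)^2 := by
    calc ∑ k ∈ Finset.range (n+1),
        qBin (2*n+1) (2*k) * (qFact qv (2*k) * PowerSeries.coeff (2*k) (qcos qv * Phi))
          * T (2*(n-k)+1)
        = qFact qv (2*n+1) * PowerSeries.coeff (2*n+1) (qtan * (qcos qv * Phi)) := by
          rw [coeff_mul_odd qtan (qcos qv * Phi) evenprod_coeff_odd n, Finset.mul_sum]
          refine Finset.sum_congr rfl fun k hk => ?_
          have hk' : k ≤ n := by have := Finset.mem_range.1 hk; omega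
          rw [T, qBin]
          have h1 : 2*n+1 - 2*k = 2*(n-k)+1 := by omega
          rw [h1]
          have n1 := qFact_ne_zero (2*k)
          have n2 := qFact_ne_zero (2*(n-k)+1)
          field_simp
      _ = qFact qv (2*n+1) * PowerSeries.coeff (2*n+1) (qsin qv * Phi) := by
          rw [← mul_assoc, qtan_mul_qcos]
      _ = (-1:Fq)^n * qv^(n*(n-1)/2) * ∏ i ∈ Finset.Icc 1 n, (1+qv^i)^2 := Bco n
  rw [← main]
  rw [Finset.sum_range_succ' (fun k =>
    qBin (2*n+1) (2*k) * (qFact qv (2*k) * PowerSeries.coeff (2*k) (qcos qv * Phi))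
      * T (2*(n-k)+1)) n]
  have h0 : qBin (2*n+1) (2*0) * (qFact qv (2*0) * PowerSeries.coeff (2*0) (qcos qv * Phi))
      * T (2*(n-0)+1) = T (2*n+1) := by
    have e0 : (2:ℕ)*0 = 0 := rfl
    rw [e0, Nat.sub_zero, qBin_zero, Acoef_zero]
    ring
  rw [h0]
  have hIcc : ∑ k ∈ Finset.Icc 1 n,
      qBin (2 * n + 1) (2 * k) * (-1 : Fq) ^ k * qv ^ (k * (k - 1) / 2) *
        (∏ i ∈ Finset.Icc 1 (k - 1), (1 + qv ^ i) ^ 2) * (1 + qv ^ k) * T (2 * n + 1 - 2 * k)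
      = ∑ j ∈ Finset.range n,
        qBin (2*n+1) (2*(j+1)) * (qFact qv (2*(j+1)) * PowerSeries.coeff (2*(j+1)) (qcos qv * Phi))
          * T (2*(n-(j+1))+1) := by
    rw [show Finset.Icc 1 n = Finset.Ico 1 (n+1) from rfl, Finset.sum_Ico_eq_sum_range]
    simp only [Nat.add_sub_cancel]
    refine Finset.sum_congr rfl fun j hj => ?_
    have hj' : j < n := Finset.mem_range.1 hj
    rw [Acoef_eq (j+1) (by omega)]
    have e1 : 1 + j = j + 1 := by omega
    have e2 : 2*n+1 - 2*(1+j) = 2*(n-(j+1))+1 := by omega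
    rw [e1] at e2 ⊢
    rw [e2]
    ring
  rw [hIcc]
  ring
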